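/- For every integer d ≥ 1 and every real ε with 0 < ε < 1/2, one has 1 − (1−ε)^{1−ε^{2d}} − ε^{1−ε^{2d}} + ε^{d+1−ε^{2d}} > 0; equivalently, (1−ε)^{1−ε^{2d}} + ε^{1−ε^{2d}} − ε^{d+1−ε^{2d}} < 1. -/

import Mathlib

private lemma exp_sub_one_le (x : ℝ) : Real.exp x - 1 ≤ x * Real.exp x := by
  have h := Real.add_one_le_exp (-x)
  have h2 := mul_le_mul_of_nonneg_right h (Real.exp_pos x).le
  rw [← Real.exp_add] at h2
  simp only [neg_add_cancel, Real.exp_zero] at h2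
  nlinarith

/-- For every integer `d ≥ 1` and `0 < ε < 1/2`,
`1 - (1-ε)^(1-ε^(2d)) - ε^(1-ε^(2d)) + ε^(d+1-ε^(2d)) > 0`; equivalently,
`(1-ε)^(1-ε^(2d)) + ε^(1-ε^(2d)) - ε^(d+1-ε^(2d)) < 1`.  (Real powers.) -/
theorem key_epsilon_inequality (d : ℕ) (hd : 1 ≤ d) (ε : ℝ) (hε0 : 0 < ε) (hε1 : ε < 1 / 2) :
    0 < 1 - (1 - ε) ^ ((1 : ℝ) - ε ^ (2 * d)) - ε ^ ((1 : ℝ) - ε ^ (2 * d))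
        + ε ^ ((d : ℝ) + 1 - ε ^ (2 * d)) ∧
      (1 - ε) ^ ((1 : ℝ) - ε ^ (2 * d)) + ε ^ ((1 : ℝ) - ε ^ (2 * d))
        - ε ^ ((d : ℝ) + 1 - ε ^ (2 * d)) < 1 := by
  have ha : 0 < 1 - ε := by linarith
  set t : ℝ := ε ^ (2 * d) with htdef
  set u : ℝ := ε ^ d with hudef
  set A : ℝ := -Real.log (1 - ε) with hA
  set B : ℝ := -Real.log ε with hB
  have hu0 : 0 < u := pow_pos hε0 d
  have hu1 : u ≤ ε := by
    calc u = ε ^ d := rfl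
    _ ≤ ε ^ 1 := pow_le_pow_of_le_one hε0.le (by linarith) hd
    _ = ε := pow_one ε
  have ht : t = u ^ 2 := by
    rw [htdef, hudef, ← pow_mul, mul_comm]
  have ht0 : 0 < t := pow_pos hε0 _
  -- A ≥ 0, B > 0
  have hA0 : 0 ≤ A := by
    have := Real.log_nonpos (by linarith) (by linarith : (1:ℝ) - ε ≤ 1)
    simp [hA]; linarith
  have hB0 : 0 < B := by
    have := Real.log_neg hε0 (by linarith : ε < 1)
    simp [hB]; linarith
  -- (1-ε) * A ≤ ε
  have haA : (1 - ε) * A ≤ ε := by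
    have h := Real.log_le_sub_one_of_pos (show (0:ℝ) < (1 - ε)⁻¹ by positivity)
    rw [Real.log_inv] at h
    have h2 : A ≤ (1 - ε)⁻¹ - 1 := by simpa [hA] using h
    have := mul_le_mul_of_nonneg_left h2 ha.le
    calc (1 - ε) * A ≤ (1 - ε) * ((1 - ε)⁻¹ - 1) := this
    _ = ε := by field_simp; ring
  -- A ≤ B
  have hAB : A ≤ B := by
    have := Real.log_le_log hε0 (by linarith : ε ≤ 1 - ε)
    simp only [hA, hB]; linarith
  -- u * (1 + B) < 1
  have hkey : u * (1 + B) < 1 := by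
    have h := Real.log_lt_sub_one_of_pos (show (0:ℝ) < ε⁻¹ by positivity)
      (by intro h; rw [inv_eq_one] at h; linarith)
    rw [Real.log_inv] at h
    have hB2 : B < ε⁻¹ - 1 := by simpa [hB] using h
    have : ε * (1 + B) < 1 := by
      have := mul_lt_mul_of_pos_left hB2 hε0
      have he : ε * (ε⁻¹ - 1) = 1 - ε := by field_simp
      nlinarith
    have h1B : 0 < 1 + B := by linarith
    nlinarith [mul_le_mul_of_nonneg_right hu1 h1B.le]
  -- rewrite rpow terms
  have eq1 : (1 - ε) ^ ((1 : ℝ) - t) = (1 - ε) * Real.exp (t * A) := by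
    rw [Real.rpow_def_of_pos ha, show Real.log (1 - ε) * ((1:ℝ) - t)
      = Real.log (1 - ε) + t * A by rw [hA]; ring, Real.exp_add, Real.exp_log ha]
  have eq2 : ε ^ ((1 : ℝ) - t) = ε * Real.exp (t * B) := by
    rw [Real.rpow_def_of_pos hε0, show Real.log ε * ((1:ℝ) - t)
      = Real.log ε + t * B by rw [hB]; ring, Real.exp_add, Real.exp_log hε0]
  have eq3 : ε ^ ((d : ℝ) + 1 - t) = u * (ε * Real.exp (t * B)) := by
    rw [Real.rpow_def_of_pos hε0, show Real.log ε * ((d : ℝ) + 1 - t)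
      = (d : ℝ) * Real.log ε + (Real.log ε + t * B) by rw [hB]; ring,
      Real.exp_add, Real.exp_add, Real.exp_log hε0, Real.exp_nat_mul,
      Real.exp_log hε0, hudef]
  rw [eq1, eq2, eq3]
  set E1 : ℝ := Real.exp (t * A) with hE1
  set E2 : ℝ := Real.exp (t * B) with hE2
  have hE1pos : 0 < E1 := Real.exp_pos _
  have hE2pos : 0 < E2 := Real.exp_pos _
  have h1 : E1 - 1 ≤ t * A * E1 := exp_sub_one_le _
  have h2 : E2 - 1 ≤ t * B * E2 := exp_sub_one_le _
  have h3 : E1 ≤ E2 := Real.exp_le_exp.mpr (by nlinarith)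
  clear_value E1 E2 t u A B
  clear htdef hudef hA hB hE1 hE2 eq1 eq2 eq3
  -- main estimate: (1-ε)(E1-1) + ε(E2-1) < u * ε * E2
  have hmain : (1 - ε) * (E1 - 1) + ε * (E2 - 1) < u * (ε * E2) := by
    have s1 : (1 - ε) * (E1 - 1) ≤ t * ε * E2 := by
      have a1 : (1 - ε) * (E1 - 1) ≤ t * ((1 - ε) * A) * E1 := by
        nlinarith [mul_le_mul_of_nonneg_left h1 ha.le]
      have a2 : t * ((1 - ε) * A) * E1 ≤ t * ε * E1 := by
        nlinarith [mul_le_mul_of_nonneg_right haA (mul_nonneg ht0.le hE1pos.le)]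
      have a3 : t * ε * E1 ≤ t * ε * E2 :=
        mul_le_mul_of_nonneg_left h3 (by positivity)
      linarith
    have s2 : ε * (E2 - 1) ≤ t * (ε * B) * E2 := by nlinarith
    have s3 : t * ε * E2 + t * (ε * B) * E2 < u * (ε * E2) := by
      have : t * (1 + B) < u := by
        rw [ht]
        calc u ^ 2 * (1 + B) = u * (u * (1 + B)) := by ring
        _ < u * 1 := by
            apply mul_lt_mul_of_pos_left hkey hu0
        _ = u := mul_one u
      nlinarith [mul_pos hε0 hE2pos]
    linarith
  constructor <;> linarith
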